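/- Let G be a finite group and let x be a non-trivial real element of G of odd order. Then the number of Sylow 2-subgroups of G that are normalized by x is even. -/

import Mathlib

open Subgroup MulAction

private lemma conj_inv_eq {G : Type*} [Group G] (a y : G) :
    a * y⁻¹ * a⁻¹ = (a * y * a⁻¹)⁻¹ := by group

/-- Conjugation by an odd power of an inverting element still inverts. -/
private lemma conj_pow_odd {G : Type*} [Group G] {c x : G} (h : c * x * c⁻¹ = x⁻¹)
    {m : ℕ} (hm : Odd m) : c ^ m * x * (c ^ m)⁻¹ = x⁻¹ := by
  have hinv : c * x⁻¹ * c⁻¹ = x := by rw [conj_inv_eq, h, inv_inv]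
  have heven : ∀ t : ℕ, c ^ (2 * t) * x * (c ^ (2 * t))⁻¹ = x := by
    intro t
    induction t with
    | zero => simp
    | succ t ih =>
      have h2 : 2 * (t + 1) = 2 + 2 * t := by ring
      have key : c ^ (2 + 2 * t) * x * (c ^ (2 + 2 * t))⁻¹
          = c ^ 2 * (c ^ (2 * t) * x * (c ^ (2 * t))⁻¹) * (c ^ 2)⁻¹ := by
        rw [pow_add, mul_inv_rev]; group
      rw [h2, key, ih, pow_two, mul_inv_rev]
      calc c * c * x * (c⁻¹ * c⁻¹) = c * (c * x * c⁻¹) * c⁻¹ := by group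
        _ = c * x⁻¹ * c⁻¹ := by rw [h]
        _ = x := hinv
  obtain ⟨t, ht⟩ := hm
  have h2 : m = 2 * t + 1 := by omega
  subst h2
  rw [pow_succ, mul_inv_rev]
  calc c ^ (2 * t) * c * x * (c⁻¹ * (c ^ (2 * t))⁻¹)
      = c ^ (2 * t) * (c * x * c⁻¹) * (c ^ (2 * t))⁻¹ := by group
    _ = c ^ (2 * t) * x⁻¹ * (c ^ (2 * t))⁻¹ := by rw [h]
    _ = x⁻¹ := by rw [conj_inv_eq, heven t]

/-- The extended centralizer of `x` : elements conjugating `x` to `x` or `x⁻¹`. -/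
private def extCent {G : Type*} [Group G] (x : G) : Subgroup G where
  carrier := {a | a * x * a⁻¹ = x ∨ a * x * a⁻¹ = x⁻¹}
  one_mem' := by simp
  mul_mem' := by
    rintro a b ha hb
    have key : a * b * x * (a * b)⁻¹ = a * (b * x * b⁻¹) * a⁻¹ := by group
    rcases hb with hb | hb <;> rcases ha with ha | ha
    · left; show _ = _; rw [key, hb, ha]
    · right; show _ = _; rw [key, hb, ha]
    · right; show _ = _; rw [key, hb, conj_inv_eq, ha]
    · left; show _ = _; rw [key, hb, conj_inv_eq, ha, inv_inv]
  inv_mem' := by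
    rintro a (ha | ha)
    · left
      have h1 : a⁻¹ * (a * x * a⁻¹) * a = a⁻¹ * x * a := by rw [ha]
      show _ = _; rw [inv_inv, ← h1]; group
    · right
      have h1 : a⁻¹ * (a * x * a⁻¹) * a = a⁻¹ * x⁻¹ * a := by rw [ha]
      have h2 : a⁻¹ * x⁻¹ * a = x := by rw [← h1]; group
      have h3 : a⁻¹ * x * a = x⁻¹ := by
        have := congrArg (·⁻¹) h2
        simp only [mul_inv_rev, inv_inv] at this
        rw [← this]; group
      show _ = _; rw [inv_inv, h3]

/-- A non-trivial real element of odd order of a finite group `G` normalizes an even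
number of Sylow 2-subgroups of `G`. -/
theorem even_card_sylow_two_normalized_by_real_odd_element
    (G : Type*) [Group G] [Fintype G] (x : G) (hx : x ≠ 1)
    (hreal : IsConj x x⁻¹) (hodd : Odd (orderOf x)) :
    Even ({Q : Sylow 2 G | x ∈ Subgroup.normalizer ((Q : Subgroup G) : Set G)}.ncard) := by
  classical
  obtain ⟨c, hcxc⟩ := isConj_iff.mp hreal
  -- extract a 2-element `g` inverting `x`
  set n := orderOf c with hn
  have hn0 : n ≠ 0 := (orderOf_pos c).ne'
  set a := n.factorization 2 with ha
  set m := n / 2 ^ a with hm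
  have hmodd : Odd m := Nat.odd_iff.mpr (Nat.two_dvd_ne_zero.mp
    (Nat.not_dvd_ordCompl Nat.prime_two hn0))
  set g := c ^ m with hg
  have hgx : g * x * g⁻¹ = x⁻¹ := conj_pow_odd hcxc hmodd
  have hg2 : g ^ 2 ^ a = 1 := by
    rw [hg, ← pow_mul]
    have : m * 2 ^ a = n := Nat.div_mul_cancel (Nat.ordProj_dvd n 2)
    rw [this, hn, pow_orderOf_eq_one]
  -- the 2-group H = ⟨g⟩
  set H := Subgroup.zpowers g with hH
  have hHK : H ≤ extCent x := Subgroup.zpowers_le.mpr (Or.inr hgx)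
  have hHp : IsPGroup 2 H := by
    intro y
    refine ⟨a, ?_⟩
    obtain ⟨k, hk⟩ := y.2
    have : ((y : G)) ^ 2 ^ a = 1 := by
      rw [← hk]
      calc (g ^ k) ^ (2 ^ a : ℕ) = (g ^ (2 ^ a : ℕ)) ^ k := by
            rw [← zpow_natCast, ← zpow_mul, mul_comm, zpow_mul, zpow_natCast]
        _ = 1 := by rw [hg2, one_zpow]
    exact Subtype.ext (by simpa using this)
  set S := {Q : Sylow 2 G | x ∈ Subgroup.normalizer ((Q : Subgroup G) : Set G)} with hS
  -- S is invariant under conjugation by elements of H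
  have hpres : ∀ (h : H) (Q : Sylow 2 G), Q ∈ S → ((h : G) • Q) ∈ S := by
    rintro ⟨h, hh⟩ Q hQ
    have hQ' : x • Q = Q := Sylow.smul_eq_iff_mem_normalizer.mpr hQ
    have hhK : h⁻¹ ∈ extCent x := (extCent x).inv_mem (hHK hh)
    have key : x • (h • Q) = h • Q := by
      have : x • h • Q = h • ((h⁻¹ * x * h) • Q) := by
        rw [smul_smul, smul_smul]
        congr 1
        group
      rw [this]
      rcases hhK with h1 | h1
      · rw [show h⁻¹ * x * h⁻¹⁻¹ = h⁻¹ * x * h by rw [inv_inv]] at h1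
        rw [h1, hQ']
      · rw [show h⁻¹ * x * h⁻¹⁻¹ = h⁻¹ * x * h by rw [inv_inv]] at h1
        rw [h1]
        have : x⁻¹ • Q = Q := by
          conv_lhs => rw [← hQ']
          rw [smul_smul, inv_mul_cancel, one_smul]
        rw [this]
    exact Sylow.smul_eq_iff_mem_normalizer.mp key
  -- H acts on S
  letI : SMul H S := ⟨fun h Q => ⟨(h : G) • Q.1, hpres h Q.1 Q.2⟩⟩
  have smul_def' : ∀ (h : H) (Q : S), ((h • Q : S) : Sylow 2 G) = (h : G) • (Q : Sylow 2 G) :=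
    fun _ _ => rfl
  letI : MulAction H S :=
    { one_smul := fun Q => Subtype.ext (by rw [smul_def']; simp)
      mul_smul := fun h1 h2 Q => Subtype.ext (by
        rw [smul_def', smul_def', smul_def', Subgroup.coe_mul, mul_smul]) }
  -- no fixed points
  have hfix : IsEmpty (fixedPoints H S) := by
    rw [isEmpty_subtype]
    rintro ⟨Q, hQ⟩ hfixQ
    have hgQ : g • Q = Q := by
      have h0 := hfixQ ⟨g, Subgroup.mem_zpowers g⟩
      have h1 := Subtype.ext_iff.mp h0
      simpa [smul_def'] using h1
    -- g is a 2-element in the normalizer of Q, hence in Q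
    have hgN : g ∈ Subgroup.normalizer ((Q : Subgroup G) : Set G) := Sylow.smul_eq_iff_mem_normalizer.mp hgQ
    have hgQ' : g ∈ (Q : Subgroup G) := by
      have h1 : g ∈ H ⊓ Subgroup.normalizer (Q : Set G) := ⟨Subgroup.mem_zpowers g, hgN⟩
      rw [hHp.inf_normalizer_sylow Q] at h1
      exact h1.2
    -- then x⁻² ∈ Q, contradiction with odd order
    have hxg : x * g * x⁻¹ ∈ (Q : Subgroup G) :=
      (Subgroup.mem_normalizer_iff.mp hQ g).mp hgQ'
    have hx2 : x⁻¹ * x⁻¹ ∈ (Q : Subgroup G) := by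
      have := (Q : Subgroup G).mul_mem ((Q : Subgroup G).inv_mem hgQ') hxg
      have heq : g⁻¹ * (x * g * x⁻¹) = x⁻¹ * x⁻¹ := by
        have h3 : g⁻¹ * x * g = x⁻¹ := by
          have h1 : g⁻¹ * (g * x * g⁻¹) * g = g⁻¹ * x⁻¹ * g := by rw [hgx]
          have h2 : g⁻¹ * x⁻¹ * g = x := by rw [← h1]; group
          have := congrArg (·⁻¹) h2
          simp only [mul_inv_rev, inv_inv] at this
          rw [← this]; group
        calc g⁻¹ * (x * g * x⁻¹) = (g⁻¹ * x * g) * x⁻¹ := by group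
          _ = x⁻¹ * x⁻¹ := by rw [h3]
      rwa [heq] at this
    have hx2' : x ^ 2 ∈ (Q : Subgroup G) := by
      have := (Q : Subgroup G).inv_mem hx2
      simpa [pow_two] using this
    obtain ⟨k, hk⟩ := Q.2 ⟨x ^ 2, hx2'⟩
    have hk' : (x ^ 2) ^ 2 ^ k = 1 := by
      have := Subtype.ext_iff.mp hk
      simpa using this
    have hdvd : orderOf (x ^ 2) ∣ 2 ^ k := orderOf_dvd_of_pow_eq_one hk'
    have hdvd2 : orderOf (x ^ 2) ∣ orderOf x := orderOf_pow_dvd 2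
    have h1 : orderOf (x ^ 2) = 1 :=
      ((Nat.Coprime.coprime_dvd_left hdvd2
        (Nat.coprime_two_right.mpr hodd)).pow_right k).eq_one_of_dvd hdvd
    have hx21 : x ^ 2 = 1 := orderOf_eq_one_iff.mp h1
    have hdvd3 : orderOf x ∣ 2 := orderOf_dvd_of_pow_eq_one hx21
    have : orderOf x = 1 :=
      (Nat.coprime_two_right.mpr hodd).eq_one_of_dvd hdvd3
    exact hx (orderOf_eq_one_iff.mp this)
  -- counting
  haveI : Finite S := Finite.of_injective (fun Q : S => (((Q : Sylow 2 G) : Subgroup G) : Set G))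
    (fun a b h => Subtype.ext (Sylow.ext (SetLike.coe_injective h)))
  have hmod := hHp.card_modEq_card_fixedPoints S
  have hzero : Nat.card (fixedPoints H S) = 0 := @Nat.card_of_isEmpty _ hfix
  rw [hzero] at hmod
  have h2 : 2 ∣ S.ncard := by
    rw [← Nat.card_coe_set_eq]
    exact Nat.modEq_zero_iff_dvd.mp hmod
  exact even_iff_two_dvd.mpr h2
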